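/- Let p be a prime with p ≡ 3 (mod 4). Writing the rising factorials as rational numbers, (3/4)_{(p²-1)/2} / (5/4)_{(p²-1)/2} = p · (1/4)_{(p+1)/2} / (3/4)_{(p-1)/2} · [Γ_p((2p²+1)/4) Γ_p(5/4)] / [Γ_p(3/4) Γ_p((2p²+3)/4)], an exact identity in ℚ_p. -/

import Mathlib

open Finset Filter

/-- Morita's `p`-adic Gamma function at natural numbers:
`Γ_p(n) = (-1)^n ∏_{1 ≤ k < n, p ∤ k} k`. -/
noncomputable def pGammaNat (p : ℕ) [Fact p.Prime] (n : ℕ) : ℤ_[p] :=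
  (-1) ^ n * ∏ k ∈ (Finset.range n).filter (fun k => ¬ p ∣ k), (k : ℤ_[p])

/-- Morita's `p`-adic Gamma function on `ℤ_p`, the continuous extension of `pGammaNat`. -/
noncomputable def pGamma (p : ℕ) [Fact p.Prime] (x : ℤ_[p]) : ℤ_[p] :=
  limUnder (Filter.comap (Nat.cast : ℕ → ℤ_[p]) (nhds x)) (pGammaNat p)

/-- Extension of `pGamma` to `ℚ_p` (by `0` outside `ℤ_p`), used to take derivatives. -/
noncomputable def pGammaQ (p : ℕ) [Fact p.Prime] (x : ℚ_[p]) : ℚ_[p] :=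
  if h : ‖x‖ ≤ 1 then (pGamma p ⟨x, h⟩ : ℚ_[p]) else 0

set_option maxHeartbeats 1000000

-- L1: recursion in if-form
theorem pGammaNat_add (p : ℕ) [Fact p.Prime] (n N : ℕ) :
    pGammaNat p (n + N) = (-1) ^ N * pGammaNat p n *
      ∏ j ∈ Finset.range N, (if p ∣ (n + j) then 1 else ((n + j : ℕ) : ℤ_[p])) := by
  unfold pGammaNat
  rw [Finset.prod_filter, Finset.prod_filter, Finset.prod_range_add]
  have : ∀ j ∈ Finset.range N, (if ¬ p ∣ (n+j) then ((n+j:ℕ) : ℤ_[p]) else 1)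
      = (if p ∣ (n+j) then 1 else ((n+j:ℕ) : ℤ_[p])) := by
    intro j _; by_cases h : p ∣ (n+j) <;> simp [h]
  rw [Finset.prod_congr rfl this, pow_add]
  ring

-- L2: unit
theorem norm_pGammaNat (p : ℕ) [Fact p.Prime] (n : ℕ) : ‖pGammaNat p n‖ = 1 := by
  unfold pGammaNat
  rw [norm_mul]
  have h1 : ‖((-1 : ℤ_[p])) ^ n‖ = 1 := by
    rcases neg_one_pow_eq_or ℤ_[p] n with h | h <;> simp [h]
  rw [h1, one_mul]
  refine Finset.prod_induction _ (fun x => ‖x‖ = 1) (fun a b ha hb => by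
    rw [norm_mul, ha, hb, one_mul]) norm_one ?_
  intro k hk
  simp only [Finset.mem_filter, Finset.mem_range] at hk
  have h2 : ¬ ‖((k : ℤ) : ℤ_[p])‖ < 1 := by
    rw [PadicInt.norm_int_lt_one_iff_dvd]
    exact_mod_cast fun h => hk.2 (Int.ofNat_dvd.mp h)
  have h3 : ‖((k : ℤ) : ℤ_[p])‖ ≤ 1 := PadicInt.norm_le_one _
  push_cast at h2 h3 ⊢
  linarith [lt_or_eq_of_le h3]


-- square roots of 1 mod p^k
theorem sq_eq_one_zmod (p : ℕ) (hp : p.Prime) (hodd : p ≠ 2) (k : ℕ) (hk : 1 ≤ k)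
    (x : ZMod (p ^ k)) (hx : x * x = 1) : x = 1 ∨ x = -1 := by
  haveI : NeZero (p ^ k) := ⟨pow_ne_zero _ hp.pos.ne'⟩
  have hpk : (p : ℤ) ^ k ∣ (x.val : ℤ) * (x.val : ℤ) - 1 := by
    have : ((x.val * x.val : ℕ) : ZMod (p ^ k)) = 1 := by
      push_cast [ZMod.natCast_val, ZMod.cast_id] at *
      exact hx
    have h1 : ((x.val * x.val - 1 : ℤ) : ZMod (p ^ k)) = 0 := by push_cast [ZMod.natCast_val, ZMod.cast_id]; rw [hx]; ring
    have := (ZMod.intCast_zmod_eq_zero_iff_dvd _ _).mp h1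
    exact_mod_cast this
  have hfact : (x.val : ℤ) * (x.val : ℤ) - 1 = ((x.val : ℤ) - 1) * ((x.val : ℤ) + 1) := by ring
  rw [hfact] at hpk
  have hp' : Prime (p : ℤ) := Nat.prime_iff_prime_int.mp hp
  -- p cannot divide both
  have hnd : ¬ ((p:ℤ) ∣ ((x.val:ℤ) - 1) ∧ (p:ℤ) ∣ ((x.val:ℤ) + 1)) := by
    rintro ⟨h1, h2⟩
    have : (p:ℤ) ∣ 2 := by have := dvd_sub h2 h1; simpa using this
    have h2' := Int.le_of_dvd (by norm_num) this
    have : (2:ℤ) ≤ p := by exact_mod_cast hp.two_le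
    have : p = 2 := by omega
    exact hodd this
  rcases (hp'.dvd_or_dvd (dvd_trans (dvd_pow_self (p:ℤ) (by omega : k ≠ 0)) hpk)) with h | h
  · left
    have hcop : IsCoprime ((p:ℤ)^k) ((x.val:ℤ) + 1) := by
      apply IsCoprime.pow_left
      rw [Prime.coprime_iff_not_dvd hp']
      exact fun hc => hnd ⟨h, hc⟩
    have : (p:ℤ)^k ∣ ((x.val:ℤ) - 1) := (IsCoprime.dvd_of_dvd_mul_right hcop hpk)
    have h0 : ((x.val : ℤ) - 1 : ZMod (p^k)) = 0 := by
      have := (ZMod.intCast_zmod_eq_zero_iff_dvd ((x.val:ℤ) - 1) (p^k)).mpr (by exact_mod_cast this)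
      exact_mod_cast this
    push_cast [ZMod.natCast_val, ZMod.cast_id] at h0
    linear_combination h0
  · right
    have hcop : IsCoprime ((p:ℤ)^k) ((x.val:ℤ) - 1) := by
      apply IsCoprime.pow_left
      rw [Prime.coprime_iff_not_dvd hp']
      exact fun hc => hnd ⟨hc, h⟩
    have : (p:ℤ)^k ∣ ((x.val:ℤ) + 1) := (IsCoprime.dvd_of_dvd_mul_left hcop hpk)
    have h0 : ((x.val : ℤ) + 1 : ZMod (p^k)) = 0 := by
      have := (ZMod.intCast_zmod_eq_zero_iff_dvd ((x.val:ℤ) + 1) (p^k)).mpr (by exact_mod_cast this)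
      exact_mod_cast this
    push_cast [ZMod.natCast_val, ZMod.cast_id] at h0
    linear_combination h0


theorem prod_units_zmod (p : ℕ) (hp : p.Prime) (hodd : p ≠ 2) (k : ℕ) (hk : 1 ≤ k) :
    haveI : NeZero (p ^ k) := ⟨pow_ne_zero _ hp.pos.ne'⟩
    ∏ u : (ZMod (p ^ k))ˣ, (u : ZMod (p ^ k)) = -1 := by
  haveI : NeZero (p ^ k) := ⟨pow_ne_zero _ hp.pos.ne'⟩
  classical
  have hne : (-1 : (ZMod (p ^ k))ˣ) ≠ 1 := by
    intro h
    have h2 : ((-1 : (ZMod (p^k))ˣ) : ZMod (p^k)) = ((1 : (ZMod (p^k))ˣ) : ZMod (p^k)) := by rw [h]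
    simp only [Units.val_neg, Units.val_one] at h2
    have hc : ((2 : ℕ) : ZMod (p^k)) = 0 := by push_cast; linear_combination -h2
    rw [ZMod.natCast_eq_zero_iff] at hc
    have := Nat.le_of_dvd (by norm_num) hc
    have hpk : p ≤ p ^ k := Nat.le_self_pow (by omega) p
    have := hp.two_le
    omega
  have key : (∏ u ∈ (univ : Finset (ZMod (p ^ k))ˣ).erase (-1), u) = 1 := by
    refine Finset.prod_involution (fun x _ => x⁻¹) (by simp) ?_ (fun a ha => ?_) (by simp)
    · intro u hu h1
      intro heq
      have : (u : ZMod (p^k)) * u = 1 := by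
        have := congrArg (Units.val) (mul_eq_one_iff_inv_eq.mpr heq).symm
        simpa using this.symm
      rcases sq_eq_one_zmod p hp hodd k hk _ this with h | h
      · exact h1 (Units.ext h)
      · exact (Finset.mem_erase.mp hu).1 (Units.ext (by simpa using h))
    · rw [Finset.mem_erase] at ha ⊢
      refine ⟨fun h => ha.1 ?_, Finset.mem_univ _⟩
      have h' : a⁻¹ = -1 := h
      rw [← inv_inv a, h']; simp
  have hprod := Finset.prod_erase_mul (univ : Finset (ZMod (p ^ k))ˣ) (fun u => u) (Finset.mem_univ (-1))
  rw [key, one_mul] at hprod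
  have h2 : ((∏ x : (ZMod (p^k))ˣ, x : (ZMod (p^k))ˣ) : ZMod (p^k)) = -1 := by
    rw [← hprod]; simp
  rw [← h2]
  exact (map_prod (Units.coeHom (ZMod (p^k))) (fun x => x) Finset.univ).symm

theorem block_prod (p : ℕ) (hp : p.Prime) (hodd : p ≠ 2) (k : ℕ) (hk : 1 ≤ k) (m : ℕ) :
    ∏ j ∈ (Finset.range (p ^ k)).filter (fun j => ¬ p ∣ (m + j)),
      ((m + j : ℕ) : ZMod (p ^ k)) = -1 := by
  haveI : NeZero (p ^ k) := ⟨pow_ne_zero _ hp.pos.ne'⟩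
  have hunit : ∀ a : ℕ, IsUnit ((a : ℕ) : ZMod (p ^ k)) ↔ ¬ p ∣ a := by
    intro a
    rw [ZMod.isUnit_iff_coprime, Nat.coprime_pow_right_iff (by omega),
      Nat.coprime_comm, Nat.Prime.coprime_iff_not_dvd hp]
  rw [← prod_units_zmod p hp hodd k hk]
  refine Finset.prod_bij (fun j hj => ((hunit (m + j)).mpr (Finset.mem_filter.mp hj).2).unit)
    (fun j hj => Finset.mem_univ _) ?_ ?_ ?_
  · intro j1 hj1 j2 hj2 heq
    have h1 : (((m + j1 : ℕ) : ZMod (p ^ k))) = ((m + j2 : ℕ) : ZMod (p ^ k)) := by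
      have := congrArg Units.val heq
      simpa [IsUnit.unit_spec] using this
    rw [ZMod.natCast_eq_natCast_iff] at h1
    have h2 := (Nat.ModEq.add_left_cancel' m h1)
    have e1 := Finset.mem_range.mp (Finset.mem_filter.mp hj1).1
    have e2 := Finset.mem_range.mp (Finset.mem_filter.mp hj2).1
    unfold Nat.ModEq at h2
    rwa [Nat.mod_eq_of_lt e1, Nat.mod_eq_of_lt e2] at h2
  · intro u hu
    set j := (((u : ZMod (p ^ k)) - (m : ZMod (p ^ k))).val) with hjdef
    have hcast : ((m + j : ℕ) : ZMod (p ^ k)) = (u : ZMod (p ^ k)) := by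
      push_cast [hjdef, ZMod.natCast_val, ZMod.cast_id]; ring
    have hdvd : ¬ p ∣ (m + j) := by
      rw [← hunit (m + j), hcast]
      exact u.isUnit
    refine ⟨j, Finset.mem_filter.mpr ⟨Finset.mem_range.mpr (ZMod.val_lt _), hdvd⟩, ?_⟩
    apply Units.ext
    simp [IsUnit.unit_spec, hcast]
  · intro j hj
    simp [IsUnit.unit_spec]


section
variable (p : ℕ) [hf : Fact p.Prime]

theorem pGammaNat_step (hodd : p ≠ 2) (n v : ℕ) (hv : 1 ≤ v) :
    ‖pGammaNat p (n + p ^ v) - pGammaNat p n‖ ≤ (p : ℝ) ^ (-(v:ℤ)) := by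
  have hp := hf.out
  set Mnat : ℕ := ∏ j ∈ (Finset.range (p ^ v)).filter (fun j => ¬ p ∣ (n + j)), (n + j) with hM
  have hcast : (∏ j ∈ Finset.range (p ^ v), (if p ∣ (n + j) then 1 else ((n + j : ℕ) : ℤ_[p])))
      = (Mnat : ℤ_[p]) := by
    rw [hM, Nat.cast_prod, Finset.prod_filter]
    refine Finset.prod_congr rfl fun j _ => ?_
    by_cases h : p ∣ (n + j) <;> simp [h]
  have hzmod : ((Mnat : ℕ) : ZMod (p ^ v)) = -1 := by
    rw [hM, Nat.cast_prod]
    exact block_prod p hp hodd v hv n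
  have hdvd : (p ^ v : ℕ) ∣ (Mnat + 1) := by
    haveI : NeZero (p ^ v) := ⟨pow_ne_zero _ hp.pos.ne'⟩
    have : ((Mnat + 1 : ℕ) : ZMod (p ^ v)) = 0 := by push_cast [hzmod]; ring
    exact (ZMod.natCast_eq_zero_iff _ _).mp this
  have hnorm : ‖(Mnat : ℤ_[p]) + 1‖ ≤ (p : ℝ) ^ (-(v:ℤ)) := by
    have : ((p : ℤ) ^ v) ∣ ((Mnat : ℤ) + 1) := by exact_mod_cast Int.natCast_dvd_natCast.mpr hdvd
    have h2 := PadicInt.norm_int_le_pow_iff_dvd (p := p) (k := (Mnat : ℤ) + 1) (n := v) |>.mpr this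
    push_cast at h2
    exact h2
  have hrec := pGammaNat_add p n (p ^ v)
  rw [hcast] at hrec
  have hoddpow : Odd (p ^ v) := (hp.odd_of_ne_two hodd).pow
  rw [hoddpow.neg_one_pow] at hrec
  have : pGammaNat p (n + p ^ v) - pGammaNat p n = -(pGammaNat p n * ((Mnat : ℤ_[p]) + 1)) := by
    rw [hrec]; ring
  rw [this, norm_neg, norm_mul, norm_pGammaNat, one_mul]
  exact hnorm

theorem pGammaNat_close (hodd : p ≠ 2) (n v t : ℕ) (hv : 1 ≤ v) :
    ‖pGammaNat p (n + t * p ^ v) - pGammaNat p n‖ ≤ (p : ℝ) ^ (-(v:ℤ)) := by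
  induction t with
  | zero => simp
  | succ t ih =>
    have key := pGammaNat_step p hodd (n + t * p ^ v) v hv
    have harith : n + (t + 1) * p ^ v = (n + t * p ^ v) + p ^ v := by ring
    rw [harith]
    calc ‖pGammaNat p ((n + t * p^v) + p^v) - pGammaNat p n‖
        = ‖(pGammaNat p ((n + t * p^v) + p^v) - pGammaNat p (n + t * p^v))
            + (pGammaNat p (n + t * p^v) - pGammaNat p n)‖ := by ring_nf
      _ ≤ max ‖pGammaNat p ((n + t * p^v) + p^v) - pGammaNat p (n + t * p^v)‖
            ‖pGammaNat p (n + t * p^v) - pGammaNat p n‖ := PadicInt.nonarchimedean _ _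
      _ ≤ (p : ℝ) ^ (-(v:ℤ)) := max_le key ih

theorem pGammaNat_lip (hodd : p ≠ 2) (m n v : ℕ) (hv : 1 ≤ v)
    (h : ‖(m : ℤ_[p]) - (n : ℤ_[p])‖ ≤ (p : ℝ) ^ (-(v:ℤ))) :
    ‖pGammaNat p m - pGammaNat p n‖ ≤ (p : ℝ) ^ (-(v:ℤ)) := by
  have main : ∀ a b : ℕ, b ≤ a → ‖(a : ℤ_[p]) - (b : ℤ_[p])‖ ≤ (p : ℝ) ^ (-(v:ℤ)) →
      ‖pGammaNat p a - pGammaNat p b‖ ≤ (p : ℝ) ^ (-(v:ℤ)) := by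
    intro a b hba hab
    have hdvd : ((p : ℤ) ^ v) ∣ ((a : ℤ) - (b : ℤ)) := by
      refine (PadicInt.norm_int_le_pow_iff_dvd (k := (a:ℤ) - b) (n := v)).mp ?_
      push_cast
      exact hab
    have hdvdnat : (p ^ v : ℕ) ∣ (a - b) := by
      have : ((a - b : ℕ) : ℤ) = (a:ℤ) - b := by omega
      rw [← this] at hdvd
      exact_mod_cast hdvd
    obtain ⟨t, ht⟩ := hdvdnat
    have ha : a = b + t * p ^ v := by rw [mul_comm t]; omega
    rw [ha]
    exact pGammaNat_close p hodd b v t hv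
  rcases le_total n m with hle | hle
  · exact main m n hle h
  · rw [norm_sub_rev]
    exact main n m hle (by rwa [norm_sub_rev] at h)

theorem tendsto_pGammaNat (hodd : p ≠ 2) (x : ℤ_[p]) :
    Tendsto (pGammaNat p) (Filter.comap (Nat.cast : ℕ → ℤ_[p]) (nhds x)) (nhds (pGamma p x)) := by
  set F := Filter.comap (Nat.cast : ℕ → ℤ_[p]) (nhds x) with hF
  haveI hne : F.NeBot := by
    rw [hF, Filter.comap_neBot_iff]
    intro t ht
    have hx : x ∈ closure (Set.range (Nat.cast : ℕ → ℤ_[p])) := by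
      rw [PadicInt.denseRange_natCast.closure_range]; trivial
    rcases mem_closure_iff_nhds.mp hx t ht with ⟨y, hyt, n, rfl⟩
    exact ⟨n, hyt⟩
  have hcauchy : Cauchy (Filter.map (pGammaNat p) F) := by
    rw [Metric.cauchy_iff]
    refine ⟨Filter.NeBot.map hne _, ?_⟩
    intro ε hε
    obtain ⟨v0, hv0⟩ : ∃ v : ℕ, ((p:ℝ)⁻¹) ^ v < ε := by
      refine exists_pow_lt_of_lt_one hε ?_
      rw [inv_lt_one_iff₀]
      right
      exact_mod_cast hf.out.one_lt
    set v := max v0 1 with hv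
    have hvbound : (p : ℝ) ^ (-(v:ℤ)) < ε := by
      calc (p : ℝ) ^ (-(v:ℤ)) = ((p:ℝ)⁻¹) ^ (v:ℕ) := by
            rw [zpow_neg, inv_pow]; norm_num
        _ ≤ ((p:ℝ)⁻¹) ^ (v0:ℕ) := by
            apply pow_le_pow_of_le_one (by positivity) ?_ (le_max_left _ _)
            rw [inv_le_one_iff₀]; right; exact_mod_cast hf.out.one_le
        _ < ε := hv0
    have hppos : (0:ℝ) < p := by exact_mod_cast hf.out.pos
    refine ⟨(pGammaNat p) '' ((Nat.cast : ℕ → ℤ_[p]) ⁻¹' Metric.ball x ((p:ℝ) ^ (-(v:ℤ)))), ?_, ?_⟩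
    · apply Filter.image_mem_map
      exact Filter.preimage_mem_comap (Metric.ball_mem_nhds x (by positivity))
    · rintro a ⟨m, hm, rfl⟩ b ⟨n, hn, rfl⟩
      simp only [Set.mem_preimage, Metric.mem_ball, dist_eq_norm] at hm hn
      have hmn : ‖(m : ℤ_[p]) - (n : ℤ_[p])‖ ≤ (p : ℝ) ^ (-(v:ℤ)) := by
        have h1 : (m : ℤ_[p]) - n = ((m : ℤ_[p]) - x) + (x - n) := by ring
        rw [h1]
        refine le_trans (PadicInt.nonarchimedean _ _) (max_le hm.le ?_)
        rw [norm_sub_rev]; exact hn.le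
      rw [dist_eq_norm]
      exact lt_of_le_of_lt (pGammaNat_lip p hodd m n v (le_max_right _ _) hmn) hvbound
  have : Filter.map (pGammaNat p) F ≤ nhds (pGamma p x) := hcauchy.le_nhds_lim
  exact this
end


section
variable (p : ℕ) [hf : Fact p.Prime]

theorem comap_natCast_neBot (x : ℤ_[p]) :
    (Filter.comap (Nat.cast : ℕ → ℤ_[p]) (nhds x)).NeBot := by
  rw [Filter.comap_neBot_iff]
  intro t ht
  have hx : x ∈ closure (Set.range (Nat.cast : ℕ → ℤ_[p])) := by
    rw [PadicInt.denseRange_natCast.closure_range]; trivial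
  rcases mem_closure_iff_nhds.mp hx t ht with ⟨y, hyt, n, rfl⟩
  exact ⟨n, hyt⟩

theorem norm_lt_one_add_iff (a b : ℤ_[p]) (hb : ‖b‖ < 1) : ‖a + b‖ < 1 ↔ ‖a‖ < 1 := by
  constructor
  · intro h
    have : a = (a + b) - b := by ring
    rw [this]
    calc ‖(a+b) - b‖ = ‖(a+b) + (-b)‖ := by ring_nf
      _ ≤ max ‖a+b‖ ‖-b‖ := PadicInt.nonarchimedean _ _
      _ < 1 := by rw [norm_neg]; exact max_lt h hb
  · intro h
    exact lt_of_le_of_lt (PadicInt.nonarchimedean _ _) (max_lt h hb)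

theorem norm_pGamma (hodd : p ≠ 2) (x : ℤ_[p]) : ‖pGamma p x‖ = 1 := by
  haveI := comap_natCast_neBot p x
  have h1 : Tendsto (fun n => ‖pGammaNat p n‖)
      (Filter.comap (Nat.cast : ℕ → ℤ_[p]) (nhds x)) (nhds ‖pGamma p x‖) :=
    (continuous_norm.tendsto _).comp (tendsto_pGammaNat p hodd x)
  have h2 : Tendsto (fun n : ℕ => ‖pGammaNat p n‖)
      (Filter.comap (Nat.cast : ℕ → ℤ_[p]) (nhds x)) (nhds 1) := by
    have : (fun n : ℕ => ‖pGammaNat p n‖) = fun _ => 1 := by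
      funext n; exact norm_pGammaNat p n
    rw [this]; exact tendsto_const_nhds
  exact tendsto_nhds_unique h1 h2

theorem pGamma_add_nat (hodd : p ≠ 2) (x : ℤ_[p]) (N : ℕ)
    (C : ℕ → Prop) [DecidablePred C] (hC : ∀ j, j < N → (C j ↔ ‖x + (j:ℤ_[p])‖ < 1)) :
    pGamma p (x + (N:ℤ_[p])) = (-1)^N * pGamma p x *
      ∏ j ∈ Finset.range N, (if C j then 1 else (x + (j:ℤ_[p]))) := by
  set F := Filter.comap (Nat.cast : ℕ → ℤ_[p]) (nhds x) with hF
  haveI := comap_natCast_neBot p x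
  -- h1
  have hshift : Tendsto (fun n : ℕ => n + N) F
      (Filter.comap (Nat.cast : ℕ → ℤ_[p]) (nhds (x + N))) := by
    rw [Filter.tendsto_comap_iff]
    have hbase : Tendsto (Nat.cast : ℕ → ℤ_[p]) F (nhds x) := tendsto_comap
    have : ((Nat.cast : ℕ → ℤ_[p]) ∘ (fun n : ℕ => n + N)) = fun n : ℕ => (n : ℤ_[p]) + N := by
      funext n; simp
    rw [this]
    exact hbase.add_const _
  have h1 : Tendsto (fun n : ℕ => pGammaNat p (n + N)) F (nhds (pGamma p (x + N))) :=
    (tendsto_pGammaNat p hodd (x + (N:ℤ_[p]))).comp hshift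
  -- h2
  have hj : ∀ j ∈ Finset.range N, Tendsto (fun n : ℕ => (if C j then 1 else ((n + j : ℕ) : ℤ_[p])))
      F (nhds (if C j then 1 else x + (j:ℤ_[p]))) := by
    intro j _
    by_cases hc : C j
    · simp only [hc, if_true]; exact tendsto_const_nhds
    · simp only [hc, if_false]
      have : (fun n : ℕ => ((n + j : ℕ) : ℤ_[p])) = fun n : ℕ => (n : ℤ_[p]) + j := by
        funext n; push_cast; ring
      rw [this]
      exact Filter.Tendsto.add_const _ tendsto_comap
  have h2 : Tendsto (fun n : ℕ => (-1:ℤ_[p])^N * pGammaNat p n *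
      ∏ j ∈ Finset.range N, (if C j then 1 else ((n + j : ℕ) : ℤ_[p]))) F
      (nhds ((-1)^N * pGamma p x * ∏ j ∈ Finset.range N, (if C j then 1 else (x + (j:ℤ_[p]))))) :=
    (tendsto_const_nhds.mul (tendsto_pGammaNat p hodd x)).mul (tendsto_finset_prod _ hj)
  -- eventual equality
  have hev : ∀ᶠ n : ℕ in F, (-1:ℤ_[p])^N * pGammaNat p n *
      ∏ j ∈ Finset.range N, (if C j then 1 else ((n + j : ℕ) : ℤ_[p])) = pGammaNat p (n + N) := by
    have hmem : (Nat.cast : ℕ → ℤ_[p]) ⁻¹' Metric.ball x 1 ∈ F :=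
      Filter.preimage_mem_comap (Metric.ball_mem_nhds x one_pos)
    filter_upwards [hmem] with n hn
    simp only [Set.mem_preimage, Metric.mem_ball, dist_eq_norm] at hn
    rw [pGammaNat_add p n N]
    congr 1
    refine Finset.prod_congr rfl fun j hj' => ?_
    rw [Finset.mem_range] at hj'
    refine if_congr ?_ rfl rfl
    rw [hC j hj']
    have hsplit : ((n + j : ℕ) : ℤ_[p]) = (x + (j:ℤ_[p])) + ((n : ℤ_[p]) - x) := by
      push_cast; ring
    have hiff : ‖((n + j : ℕ) : ℤ_[p])‖ < 1 ↔ ‖x + (j:ℤ_[p])‖ < 1 := by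
      rw [hsplit]; exact norm_lt_one_add_iff p _ _ hn
    rw [← hiff]
    constructor
    · intro h
      have h2 : (p:ℤ) ∣ ((n+j : ℕ) : ℤ) := by
        rw [← PadicInt.norm_int_lt_one_iff_dvd]
        push_cast
        exact_mod_cast h
      exact_mod_cast h2
    · intro h
      have : (p:ℤ) ∣ ((n + j : ℕ) : ℤ) := Int.natCast_dvd_natCast.mpr h
      rw [← PadicInt.norm_int_lt_one_iff_dvd] at this
      exact_mod_cast this
  exact tendsto_nhds_unique h1 (h2.congr' hev)
end


theorem prod_factorization_base (p : ℕ) [Fact p.Prime] (h4 : p % 4 = 3)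
    (q half : ℤ_[p]) (hq : 4 * q = 1) (hhalf : 2 * half = 1) :
    (∏ j ∈ Finset.range ((p ^ 2 - 1) / 2), ((3 : ℚ_[p]) / 4 + (j : ℚ_[p])))
        / (∏ j ∈ Finset.range ((p ^ 2 - 1) / 2), ((5 : ℚ_[p]) / 4 + (j : ℚ_[p])))
      = (p : ℚ_[p]) * (∏ j ∈ Finset.range ((p + 1) / 2), ((1 : ℚ_[p]) / 4 + (j : ℚ_[p])))
          / (∏ j ∈ Finset.range ((p - 1) / 2), ((3 : ℚ_[p]) / 4 + (j : ℚ_[p])))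
        * ((pGamma p (q + (p : ℤ_[p]) ^ 2 * half) : ℚ_[p]) * (pGamma p (q + 1) : ℚ_[p]))
        / ((pGamma p (3 * q) : ℚ_[p]) * (pGamma p (3 * q + (p : ℤ_[p]) ^ 2 * half) : ℚ_[p])) := by
  have hp : p.Prime := Fact.out
  have hp2 : 2 ≤ p := hp.two_le
  have hodd : p ≠ 2 := by omega
  have hp3 : 3 ≤ p := by
    rcases Nat.lt_or_ge p 3 with h | h
    · interval_cases p <;> omega
    · exact h
  obtain ⟨s, hs⟩ : ∃ s, p = 4 * s + 3 := ⟨p / 4, by omega⟩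
  set N : ℕ := (p ^ 2 - 1) / 2 with hNdef
  have hpp : p ^ 2 = p * p := by ring
  have hppodd : (p * p) % 2 = 1 := by
    have h1 : p % 2 = 1 := by omega
    have := Nat.odd_mul.mpr ⟨Nat.odd_iff.mpr h1, Nat.odd_iff.mpr h1⟩
    exact Nat.odd_iff.mp this
  have h9 : 9 ≤ p * p := Nat.mul_le_mul hp3 hp3
  have hNN : 2 * N = p * p - 1 := by rw [hNdef, hpp]; omega
  -- cast facts
  have hNcast : (2:ℤ_[p]) * (N:ℤ_[p]) = (p:ℤ_[p])^2 - 1 := by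
    have h1 : ((2 * N : ℕ) : ℤ_[p]) = ((p * p - 1 : ℕ) : ℤ_[p]) := by rw [hNN]
    rw [Nat.cast_sub (by omega)] at h1
    push_cast at h1
    linear_combination h1
  have hmul4 : ∀ a b : ℤ_[p], 4 * a = 4 * b → a = b := by
    intro a b h
    have h2 : q * (4 * a) = q * (4 * b) := by rw [h]
    have e : ∀ c : ℤ_[p], q * (4 * c) = c := by
      intro c
      calc q * (4 * c) = (4 * q) * c := by ring
        _ = c := by rw [hq, one_mul]
    rwa [e a, e b] at h2
  have hkey1 : q + (p:ℤ_[p])^2 * half = 3*q + (N:ℤ_[p]) := by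
    apply hmul4
    linear_combination (-2:ℤ_[p])*hq + (2*(p:ℤ_[p])^2)*hhalf + (-2:ℤ_[p])*hNcast
  have hkey2 : 3*q + (p:ℤ_[p])^2 * half = (q + 1) + (N:ℤ_[p]) := by
    apply hmul4
    linear_combination (2:ℤ_[p])*hq + (2*(p:ℤ_[p])^2)*hhalf + (-2:ℤ_[p])*hNcast
  -- norm conditions
  have h4unit : ‖(4:ℤ_[p])‖ = 1 := PadicInt.isUnit_iff.mp (IsUnit.of_mul_eq_one q hq)
  have hcondgen : ∀ (c : ℕ) (x : ℤ_[p]), (((c:ℤ_[p])) = 4 * x) →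
      ∀ j : ℕ, (p ∣ (c + 4*j)) ↔ ‖x + (j:ℤ_[p])‖ < 1 := by
    intro c x hcx j
    have hso : ((c + 4*j : ℕ) : ℤ_[p]) = 4 * (x + (j:ℤ_[p])) := by
      push_cast [hcx]; ring
    have hn1 : ‖x + (j:ℤ_[p])‖ = ‖((c + 4*j : ℕ) : ℤ_[p])‖ := by
      rw [hso, norm_mul, h4unit, one_mul]
    rw [hn1, show ((c + 4*j : ℕ) : ℤ_[p]) = (((c + 4*j : ℕ) : ℤ) : ℤ_[p]) by push_cast; ring,
      PadicInt.norm_int_lt_one_iff_dvd, Int.natCast_dvd_natCast]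
  have hcond1 : ∀ j : ℕ, (p ∣ (3 + 4*j)) ↔ ‖3*q + (j:ℤ_[p])‖ < 1 :=
    hcondgen 3 (3*q) (by push_cast; linear_combination (-3:ℤ_[p])*hq)
  have hcond2 : ∀ j : ℕ, (p ∣ (5 + 4*j)) ↔ ‖(q+1) + (j:ℤ_[p])‖ < 1 :=
    hcondgen 5 (q+1) (by push_cast; linear_combination (-1:ℤ_[p])*hq)
  -- functional equation applications
  have A1 : pGamma p (3*q + (N:ℤ_[p])) = (-1)^N * pGamma p (3*q) *
      ∏ j ∈ Finset.range N, (if p ∣ (3 + 4*j) then 1 else (3*q + (j:ℤ_[p]))) :=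
    pGamma_add_nat p hodd (3*q) N _ (fun j _ => hcond1 j)
  have A2 : pGamma p ((q+1) + (N:ℤ_[p])) = (-1)^N * pGamma p (q+1) *
      ∏ j ∈ Finset.range N, (if p ∣ (5 + 4*j) then 1 else ((q+1) + (j:ℤ_[p]))) :=
    pGamma_add_nat p hodd (q+1) N _ (fun j _ => hcond2 j)
  set Pi1 : ℤ_[p] := ∏ j ∈ Finset.range N, (if p ∣ (3 + 4*j) then 1 else (3*q + (j:ℤ_[p]))) with hPi1
  set Pi2 : ℤ_[p] := ∏ j ∈ Finset.range N, (if p ∣ (5 + 4*j) then 1 else ((q+1) + (j:ℤ_[p]))) with hPi2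
  -- coercion of q
  have hqQ : 4 * ((q : ℤ_[p]) : ℚ_[p]) = 1 := by
    have := congrArg (fun z : ℤ_[p] => (z : ℚ_[p])) hq
    push_cast at this
    exact this
  have coeprod : ∀ (f : ℕ → ℤ_[p]) (t : Finset ℕ),
      ((∏ j ∈ t, f j : ℤ_[p]) : ℚ_[p]) = ∏ j ∈ t, ((f j : ℤ_[p]) : ℚ_[p]) := by
    intro f t
    induction t using Finset.cons_induction with
    | empty => simp
    | cons a t ha ih => rw [Finset.prod_cons, Finset.prod_cons, PadicInt.coe_mul, ih]
  -- product splittings in ℚ_[p]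
  have hprod1 : (∏ j ∈ Finset.range N, ((3 : ℚ_[p]) / 4 + (j : ℚ_[p])))
      = ((Pi1 : ℤ_[p]) : ℚ_[p]) *
        ∏ j ∈ Finset.range N, (if p ∣ (3 + 4*j) then ((3 : ℚ_[p]) / 4 + (j : ℚ_[p])) else 1) := by
    rw [hPi1, coeprod, ← Finset.prod_mul_distrib]
    refine Finset.prod_congr rfl fun j _ => ?_
    by_cases h : p ∣ (3 + 4*j)
    · simp [h]
    · simp only [h, if_false, mul_one]
      have h3c : ((3:ℤ_[p]):ℚ_[p]) = 3 := by norm_cast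
      push_cast [h3c]
      linear_combination (-(3:ℚ_[p])/4)*hqQ
  have hprod2 : (∏ j ∈ Finset.range N, ((5 : ℚ_[p]) / 4 + (j : ℚ_[p])))
      = ((Pi2 : ℤ_[p]) : ℚ_[p]) *
        ∏ j ∈ Finset.range N, (if p ∣ (5 + 4*j) then ((5 : ℚ_[p]) / 4 + (j : ℚ_[p])) else 1) := by
    rw [hPi2, coeprod, ← Finset.prod_mul_distrib]
    refine Finset.prod_congr rfl fun j _ => ?_
    by_cases h : p ∣ (5 + 4*j)
    · simp [h]
    · simp only [h, if_false, mul_one]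
      push_cast
      linear_combination (-(1:ℚ_[p])/4)*hqQ
  -- reindexing for V1
  have hfact1 : ∀ i, i < (p+1)/2 → 4 * ((p*(4*i+1)-3)/4) + 3 = p*(4*i+1) ∧ (p*(4*i+1)-3)/4 < N := by
    intro i hi
    have key : p*(4*i+1) = 4*(4*s*i + s + 3*i) + 3 := by rw [hs]; ring
    have hb : p*(4*i+1) ≤ 2*(p*p) := by
      have h1 : 4*i+1 ≤ 2*p := by omega
      calc p*(4*i+1) ≤ p*(2*p) := Nat.mul_le_mul_left p h1
        _ = 2*(p*p) := by ring
    generalize hT : 4*s*i + s + 3*i = t at key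
    generalize hX : p*(4*i+1) = X at key hb ⊢
    generalize hPP : p*p = PP at hb hNN h9
    omega
  have hV1 : ∏ i ∈ Finset.range ((p+1)/2), ((p:ℚ_[p]) * ((1 : ℚ_[p]) / 4 + (i : ℚ_[p])))
      = ∏ j ∈ (Finset.range N).filter (fun j => p ∣ (3 + 4*j)), ((3 : ℚ_[p]) / 4 + (j : ℚ_[p])) := by
    refine Finset.prod_bij (fun i _ => (p*(4*i+1)-3)/4) ?_ ?_ ?_ ?_
    · intro i hi
      rw [Finset.mem_range] at hi
      obtain ⟨he, hlt⟩ := hfact1 i hi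
      rw [Finset.mem_filter, Finset.mem_range]
      show (p*(4*i+1)-3)/4 < N ∧ p ∣ 3 + 4*((p*(4*i+1)-3)/4)
      exact ⟨hlt, ⟨4*i+1, by omega⟩⟩
    · intro i1 hi1 i2 hi2 heq
      rw [Finset.mem_range] at hi1 hi2
      have h1 := (hfact1 i1 hi1).1
      have h2 := (hfact1 i2 hi2).1
      rw [heq] at h1
      have := h1.symm.trans h2
      have := Nat.eq_of_mul_eq_mul_left hp.pos this.symm
      omega
    · intro j hj
      rw [Finset.mem_filter, Finset.mem_range] at hj
      obtain ⟨hjN, m, hm⟩ := hj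
      have hmod : m % 4 = 1 := by
        have h1 : (p*m) % 4 = (3 * (m % 4)) % 4 := by rw [Nat.mul_mod, h4]
        have h2 : (p*m) % 4 = 3 := by rw [← hm]; omega
        omega
      have hb2 : p*m < 2*(p*p) := by
        rw [← hm]
        generalize hPP : p*p = PP at hNN h9
        omega
      have hmlt : m < 2*p := by
        have h3 : p*m < p*(2*p) := by
          calc p*m < 2*(p*p) := hb2
            _ = p*(2*p) := by ring
        exact Nat.lt_of_mul_lt_mul_left h3
      refine ⟨(m-1)/4, Finset.mem_range.mpr (by omega), ?_⟩
      have h41 : 4*((m-1)/4)+1 = m := by omega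
      rw [h41, ← hm]
      omega
    · intro i hi
      rw [Finset.mem_range] at hi
      have he := (hfact1 i hi).1
      have hcast := congrArg (Nat.cast : ℕ → ℚ_[p]) he
      push_cast at hcast
      linear_combination (-(1:ℚ_[p])/4) * hcast
  -- reindexing for V2
  have hfact2 : ∀ i, i < (p-1)/2 → 4 * ((p*(4*i+3)-5)/4) + 5 = p*(4*i+3) ∧ (p*(4*i+3)-5)/4 < N := by
    intro i hi
    have key : p*(4*i+3) = 4*(4*s*i + 3*s + 3*i + 1) + 5 := by rw [hs]; ring
    have hb : p*(4*i+3) ≤ 2*(p*p) := by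
      have h1 : 4*i+3 ≤ 2*p := by omega
      calc p*(4*i+3) ≤ p*(2*p) := Nat.mul_le_mul_left p h1
        _ = 2*(p*p) := by ring
    generalize hT : 4*s*i + 3*s + 3*i + 1 = t at key
    generalize hX : p*(4*i+3) = X at key hb ⊢
    generalize hPP : p*p = PP at hb hNN h9
    omega
  have hV2 : ∏ i ∈ Finset.range ((p-1)/2), ((p:ℚ_[p]) * ((3 : ℚ_[p]) / 4 + (i : ℚ_[p])))
      = ∏ j ∈ (Finset.range N).filter (fun j => p ∣ (5 + 4*j)), ((5 : ℚ_[p]) / 4 + (j : ℚ_[p])) := by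
    refine Finset.prod_bij (fun i _ => (p*(4*i+3)-5)/4) ?_ ?_ ?_ ?_
    · intro i hi
      rw [Finset.mem_range] at hi
      obtain ⟨he, hlt⟩ := hfact2 i hi
      rw [Finset.mem_filter, Finset.mem_range]
      show (p*(4*i+3)-5)/4 < N ∧ p ∣ 5 + 4*((p*(4*i+3)-5)/4)
      exact ⟨hlt, ⟨4*i+3, by omega⟩⟩
    · intro i1 hi1 i2 hi2 heq
      rw [Finset.mem_range] at hi1 hi2
      have h1 := (hfact2 i1 hi1).1
      have h2 := (hfact2 i2 hi2).1
      rw [heq] at h1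
      have := h1.symm.trans h2
      have := Nat.eq_of_mul_eq_mul_left hp.pos this.symm
      omega
    · intro j hj
      rw [Finset.mem_filter, Finset.mem_range] at hj
      obtain ⟨hjN, m, hm⟩ := hj
      have hmod : m % 4 = 3 := by
        have h1 : (p*m) % 4 = (3 * (m % 4)) % 4 := by rw [Nat.mul_mod, h4]
        have h2 : (p*m) % 4 = 1 := by rw [← hm]; omega
        omega
      have hb2 : p*m < 2*(p*p) := by
        rw [← hm]
        generalize hPP : p*p = PP at hNN h9
        omega
      have hmlt : m < 2*p := by
        have h3 : p*m < p*(2*p) := by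
          calc p*m < 2*(p*p) := hb2
            _ = p*(2*p) := by ring
        exact Nat.lt_of_mul_lt_mul_left h3
      refine ⟨(m-3)/4, Finset.mem_range.mpr (by omega), ?_⟩
      have h43 : 4*((m-3)/4)+3 = m := by omega
      rw [h43, ← hm]
      omega
    · intro i hi
      rw [Finset.mem_range] at hi
      have he := (hfact2 i hi).1
      have hcast := congrArg (Nat.cast : ℕ → ℚ_[p]) he
      push_cast at hcast
      linear_combination (-(1:ℚ_[p])/4) * hcast
  -- nonvanishing
  have hpneQ : (p:ℚ_[p]) ≠ 0 := Nat.cast_ne_zero.mpr hp.pos.ne'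
  have h34ne : ∀ j : ℕ, ((3:ℚ_[p])/4 + (j:ℚ_[p])) ≠ 0 := by
    intro j h0
    have hc : ((3+4*j : ℕ) : ℚ_[p]) = 4*((3:ℚ_[p])/4 + (j:ℚ_[p])) := by push_cast; ring
    rw [h0, mul_zero] at hc
    exact Nat.cast_ne_zero.mpr (by omega) hc
  have hP2ne : (∏ i ∈ Finset.range ((p-1)/2), ((3 : ℚ_[p]) / 4 + (i : ℚ_[p]))) ≠ 0 :=
    Finset.prod_ne_zero_iff.mpr (fun i _ => h34ne i)
  have hG1ne : ((pGamma p (3*q) : ℤ_[p]) : ℚ_[p]) ≠ 0 := by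
    rw [PadicInt.coe_ne_zero]
    intro h0
    have := norm_pGamma p hodd (3*q)
    rw [h0, norm_zero] at this
    norm_num at this
  have hG2ne : ((pGamma p (q+1) : ℤ_[p]) : ℚ_[p]) ≠ 0 := by
    rw [PadicInt.coe_ne_zero]
    intro h0
    have := norm_pGamma p hodd (q+1)
    rw [h0, norm_zero] at this
    norm_num at this
  have hPi2ne : ((Pi2 : ℤ_[p]) : ℚ_[p]) ≠ 0 := by
    rw [PadicInt.coe_ne_zero, hPi2]
    rw [Finset.prod_ne_zero_iff]
    intro j _
    by_cases h : p ∣ (5 + 4*j)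
    · simp [h]
    · simp only [h, if_false]
      intro h0
      exact h ((hcond2 j).mpr (by rw [h0, norm_zero]; norm_num))
  -- repackage V-products
  have hV1' : (∏ j ∈ Finset.range N, (if p ∣ (3 + 4*j) then ((3 : ℚ_[p]) / 4 + (j : ℚ_[p])) else 1))
      = (p:ℚ_[p])^((p+1)/2) * ∏ i ∈ Finset.range ((p+1)/2), ((1 : ℚ_[p]) / 4 + (i : ℚ_[p])) := by
    rw [← Finset.prod_filter, ← hV1, Finset.prod_mul_distrib, Finset.prod_const,
      Finset.card_range]
  have hV2' : (∏ j ∈ Finset.range N, (if p ∣ (5 + 4*j) then ((5 : ℚ_[p]) / 4 + (j : ℚ_[p])) else 1))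
      = (p:ℚ_[p])^((p-1)/2) * ∏ i ∈ Finset.range ((p-1)/2), ((3 : ℚ_[p]) / 4 + (i : ℚ_[p])) := by
    rw [← Finset.prod_filter, ← hV2, Finset.prod_mul_distrib, Finset.prod_const,
      Finset.card_range]
  have hsplitpow : ((p:ℚ_[p]))^((p+1)/2) = (p:ℚ_[p]) * (p:ℚ_[p])^((p-1)/2) := by
    have h21 : (p+1)/2 = (p-1)/2 + 1 := by omega
    rw [h21, pow_succ]
    ring
  have hppowne : ((p:ℚ_[p]))^((p-1)/2) ≠ 0 := pow_ne_zero _ hpneQ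
  -- final assembly
  rw [hkey1, A1, hkey2, A2, hprod1, hprod2, hV1', hV2', hsplitpow]
  have hNeg : (((-1)^N * pGamma p (3*q) * Pi1 : ℤ_[p]) : ℚ_[p])
      = (-1)^N * ((pGamma p (3*q) : ℤ_[p]) : ℚ_[p]) * ((Pi1 : ℤ_[p]) : ℚ_[p]) := by
    push_cast
    ring
  have hNeg2 : (((-1)^N * pGamma p (q+1) * Pi2 : ℤ_[p]) : ℚ_[p])
      = (-1)^N * ((pGamma p (q+1) : ℤ_[p]) : ℚ_[p]) * ((Pi2 : ℤ_[p]) : ℚ_[p]) := by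
    push_cast
    ring
  rw [hNeg, hNeg2]
  have hsignne : ((-1 : ℚ_[p]))^N ≠ 0 := pow_ne_zero _ (by norm_num)
  have hden1 : ((Pi2 : ℤ_[p]) : ℚ_[p]) * ((p:ℚ_[p])^((p-1)/2) *
      ∏ i ∈ Finset.range ((p-1)/2), ((3 : ℚ_[p]) / 4 + (i : ℚ_[p]))) ≠ 0 :=
    mul_ne_zero hPi2ne (mul_ne_zero hppowne hP2ne)
  have hden2 : (∏ i ∈ Finset.range ((p-1)/2), ((3 : ℚ_[p]) / 4 + (i : ℚ_[p]))) *
      (((pGamma p (3*q) : ℤ_[p]) : ℚ_[p]) *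
        ((-1)^N * ((pGamma p (q+1) : ℤ_[p]) : ℚ_[p]) * ((Pi2 : ℤ_[p]) : ℚ_[p]))) ≠ 0 :=
    mul_ne_zero hP2ne (mul_ne_zero hG1ne (mul_ne_zero (mul_ne_zero hsignne hG2ne) hPi2ne))
  rw [div_mul_eq_mul_div, div_div, div_eq_div_iff hden1 hden2]
  ring
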